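/- arXiv:1705.08526 — 4 statements merged into one kernel-verified Lean document; each statement's English description precedes it below -/
import Mathlib

section
/- In a completely randomized experiment with general real potential outcomes, the variance of the difference-in-means estimator τ̂(T) = (1/N₁)Σ_{i∈T} Y₁(i) − (1/N₀)Σ_{i∉T} Y₀(i) over the uniform distribution on subsets T of size N₁ equals S₁²/N₁ + S₀²/N₀ − S_τ²/N, where S₁² = (1/(N−1))Σᵢ(Y₁(i) − Ȳ(1))², S₀² = (1/(N−1))Σᵢ(Y₀(i) − Ȳ(0))², and S_τ² = (1/(N−1))Σᵢ(τᵢ − τ)² with τᵢ = Y₁(i) − Y₀(i). -/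
/-- Expectation of a real-valued statistic `f` of the treatment group `T`,
where `T` is a uniformly random subset of `{1,…,N}` of size `N₁`. -/
noncomputable def expE (N N₁ : ℕ) (f : Finset (Fin N) → ℝ) : ℝ :=
  (∑ T ∈ Finset.powersetCard N₁ (Finset.univ : Finset (Fin N)), f T) /
    ((Finset.powersetCard N₁ (Finset.univ : Finset (Fin N))).card : ℝ)

/-- Variance of a real-valued statistic `f` over uniformly random subsets of size `N₁`. -/
noncomputable def varE (N N₁ : ℕ) (f : Finset (Fin N) → ℝ) : ℝ :=
  expE N N₁ (fun T => (f T - expE N N₁ f) ^ 2)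

open Finset

lemma count_supersets {α : Type*} [DecidableEq α] (s u : Finset α) (n : ℕ)
    (hu : u ⊆ s) (hn : u.card ≤ n) :
    ((s.powersetCard n).filter (fun T => u ⊆ T)).card = (s.card - u.card).choose (n - u.card) := by
  rw [show (s.card - u.card).choose (n - u.card) = ((s \ u).powersetCard (n - u.card)).card from
    by rw [Finset.card_powersetCard, card_sdiff_of_subset hu]]
  apply Finset.card_nbij' (fun T => T \ u) (fun V => V ∪ u)
  · intro T hT
    simp only [mem_coe, mem_filter, mem_powersetCard] at hT
    obtain ⟨⟨hTs, hTc⟩, huT⟩ := hT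
    rw [mem_coe, mem_powersetCard]
    refine ⟨sdiff_subset_sdiff hTs le_rfl, by rw [card_sdiff_of_subset huT, hTc]⟩
  · intro V hV
    rw [mem_coe, mem_powersetCard] at hV
    obtain ⟨hVs, hVc⟩ := hV
    simp only [mem_coe, mem_filter, mem_powersetCard]
    have hdisj : Disjoint V u := disjoint_of_subset_left hVs sdiff_disjoint
    refine ⟨⟨union_subset (hVs.trans sdiff_subset) hu, ?_⟩, subset_union_right⟩
    rw [card_union_of_disjoint hdisj, hVc]
    omega
  · intro T hT
    simp only [mem_coe, mem_filter, mem_powersetCard] at hT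
    exact sdiff_union_of_subset hT.2
  · intro V hV
    rw [mem_coe, mem_powersetCard] at hV
    have hdisj : Disjoint V u := disjoint_of_subset_left hV.1 sdiff_disjoint
    exact union_sdiff_cancel_right hdisj

lemma count_mem (N n : ℕ) (hn : 1 ≤ n) (i : Fin N) :
    (((Finset.univ : Finset (Fin N)).powersetCard n).filter (fun T => i ∈ T)).card
      = (N - 1).choose (n - 1) := by
  have h := count_supersets (Finset.univ : Finset (Fin N)) {i} n (by simp) (by simpa)
  simpa [Finset.singleton_subset_iff, Finset.card_univ] using h

lemma count_pair (N n : ℕ) (hn : 2 ≤ n) (i j : Fin N) (hij : i ≠ j) :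
    (((Finset.univ : Finset (Fin N)).powersetCard n).filter (fun T => i ∈ T ∧ j ∈ T)).card
      = (N - 2).choose (n - 2) := by
  have hcard : ({i, j} : Finset (Fin N)).card = 2 := by
    rw [card_insert_of_notMem (by simpa), card_singleton]
  have h := count_supersets (Finset.univ : Finset (Fin N)) {i, j} n (by simp) (by omega)
  rw [hcard, Finset.card_univ, Fintype.card_fin] at h
  rw [← h]
  congr 1
  ext T
  simp [Finset.insert_subset_iff]

lemma count_pair_one (N : ℕ) (i j : Fin N) (hij : i ≠ j) :
    (((Finset.univ : Finset (Fin N)).powersetCard 1).filter (fun T => i ∈ T ∧ j ∈ T)).card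
      = 0 := by
  rw [Finset.card_eq_zero]
  ext T
  simp only [mem_filter, mem_powersetCard, notMem_empty, iff_false, not_and]
  rintro ⟨-, hc⟩ hi hj
  rw [Finset.card_eq_one] at hc
  obtain ⟨x, rfl⟩ := hc
  simp only [Finset.mem_singleton] at hi hj
  exact hij (hi.trans hj.symm)

lemma expE_card_ne (N n : ℕ) (hnN : n ≤ N) :
    ((Finset.powersetCard n (Finset.univ : Finset (Fin N))).card : ℝ) ≠ 0 := by
  rw [Finset.card_powersetCard, Finset.card_univ, Fintype.card_fin]
  exact_mod_cast (Nat.choose_pos hnN).ne'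

lemma sum_linear (N n : ℕ) (hn : 1 ≤ n) (a : Fin N → ℝ) :
    ∑ T ∈ Finset.powersetCard n (Finset.univ : Finset (Fin N)), ∑ i ∈ T, a i
      = ((N - 1).choose (n - 1) : ℝ) * ∑ i, a i := by
  calc ∑ T ∈ Finset.powersetCard n (Finset.univ : Finset (Fin N)), ∑ i ∈ T, a i
      = ∑ T ∈ Finset.powersetCard n (Finset.univ : Finset (Fin N)),
          ∑ i : Fin N, if i ∈ T then a i else 0 := by
        refine Finset.sum_congr rfl fun T _ => ?_
        rw [Finset.sum_ite_mem, Finset.univ_inter]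
    _ = ∑ i : Fin N, ∑ T ∈ Finset.powersetCard n (Finset.univ : Finset (Fin N)),
          if i ∈ T then a i else 0 := Finset.sum_comm
    _ = ∑ i : Fin N, ((N - 1).choose (n - 1) : ℝ) * a i := by
        refine Finset.sum_congr rfl fun i _ => ?_
        rw [Finset.sum_ite, Finset.sum_const_zero, add_zero, Finset.sum_const,
          count_mem N n hn i, nsmul_eq_mul]
    _ = _ := by rw [← Finset.mul_sum]

lemma sum_sq_aux (N n : ℕ) (hn : 1 ≤ n) (a : Fin N → ℝ) :
    ∑ T ∈ Finset.powersetCard n (Finset.univ : Finset (Fin N)), (∑ i ∈ T, a i) ^ 2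
      = ((N - 1).choose (n - 1) : ℝ) * ∑ i, (a i) ^ 2
        + (if 2 ≤ n then ((N - 2).choose (n - 2) : ℝ) else 0)
            * ((∑ i, a i) ^ 2 - ∑ i, (a i) ^ 2) := by
  set c2 : ℝ := (if 2 ≤ n then ((N - 2).choose (n - 2) : ℝ) else 0) with hc2
  have key : ∀ T : Finset (Fin N), (∑ i ∈ T, a i) ^ 2
      = ∑ i : Fin N, ∑ j : Fin N, if i ∈ T ∧ j ∈ T then a i * a j else 0 := by
    intro T
    have h1 : ∀ i j : Fin N, (if i ∈ T ∧ j ∈ T then a i * a j else 0)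
        = (if i ∈ T then a i else 0) * (if j ∈ T then a j else 0) := by
      intro i j
      by_cases hi : i ∈ T <;> by_cases hj : j ∈ T <;> simp [hi, hj]
    simp_rw [h1, ← Finset.mul_sum, ← Finset.sum_mul]
    rw [Finset.sum_ite_mem, Finset.univ_inter, sq]
  have count_eq : ∀ i j : Fin N,
      (((((Finset.univ : Finset (Fin N)).powersetCard n)).filter
        (fun T => i ∈ T ∧ j ∈ T)).card : ℝ)
      = if i = j then ((N - 1).choose (n - 1) : ℝ) else c2 := by
    intro i j
    by_cases hij : i = j
    · subst hij
      rw [if_pos rfl, ← count_mem N n hn i]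
      norm_cast
      congr 1
      apply Finset.filter_congr
      intro T _
      simp
    · rw [if_neg hij, hc2]
      by_cases h2 : 2 ≤ n
      · rw [if_pos h2, count_pair N n h2 i j hij]
      · have hn1 : n = 1 := by omega
        subst hn1
        rw [if_neg h2, count_pair_one N i j hij]
        norm_num
  calc ∑ T ∈ Finset.powersetCard n (Finset.univ : Finset (Fin N)), (∑ i ∈ T, a i) ^ 2
      = ∑ T ∈ Finset.powersetCard n (Finset.univ : Finset (Fin N)),
          ∑ i : Fin N, ∑ j : Fin N, if i ∈ T ∧ j ∈ T then a i * a j else 0 :=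
        Finset.sum_congr rfl fun T _ => key T
    _ = ∑ i : Fin N, ∑ T ∈ Finset.powersetCard n (Finset.univ : Finset (Fin N)),
          ∑ j : Fin N, if i ∈ T ∧ j ∈ T then a i * a j else 0 := Finset.sum_comm
    _ = ∑ i : Fin N, ∑ j : Fin N,
          ∑ T ∈ Finset.powersetCard n (Finset.univ : Finset (Fin N)),
          (if i ∈ T ∧ j ∈ T then a i * a j else 0) := by
        exact Finset.sum_congr rfl fun i _ => Finset.sum_comm
    _ = ∑ i : Fin N, ∑ j : Fin N,
          (if i = j then ((N - 1).choose (n - 1) : ℝ) else c2) * (a i * a j) := by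
        refine Finset.sum_congr rfl fun i _ => Finset.sum_congr rfl fun j _ => ?_
        rw [Finset.sum_ite, Finset.sum_const_zero, add_zero, Finset.sum_const,
          nsmul_eq_mul, count_eq i j]
    _ = ∑ i : Fin N, (((N - 1).choose (n - 1) : ℝ) * (a i * a i)
          + ∑ j ∈ Finset.univ.erase i, c2 * (a i * a j)) := by
        refine Finset.sum_congr rfl fun i _ => ?_
        rw [← Finset.add_sum_erase _ _ (Finset.mem_univ i), if_pos rfl]
        congr 1
        refine Finset.sum_congr rfl fun j hj => ?_
        rw [if_neg (Ne.symm (Finset.ne_of_mem_erase hj))]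
    _ = _ := by
        rw [Finset.sum_add_distrib, ← Finset.mul_sum]
        have h3 : ∀ i : Fin N, ∑ j ∈ Finset.univ.erase i, c2 * (a i * a j)
            = c2 * (a i * (∑ j, a j) - a i ^ 2) := by
          intro i
          rw [← Finset.mul_sum, ← Finset.mul_sum, Finset.sum_erase_eq_sub (Finset.mem_univ i)]
          ring
        simp_rw [h3]
        rw [← Finset.mul_sum, Finset.sum_sub_distrib, ← Finset.sum_mul]
        have h4 : ∑ i : Fin N, a i * a i = ∑ i : Fin N, a i ^ 2 :=
          Finset.sum_congr rfl fun i _ => (sq (a i)).symm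
        rw [h4]
        ring

lemma choose_id1 (N n : ℕ) (h1 : 1 ≤ n) (h2 : n ≤ N) :
    (N : ℝ) * ((N - 1).choose (n - 1) : ℝ) = (n : ℝ) * (N.choose n : ℝ) := by
  have h := Nat.add_one_mul_choose_eq (N - 1) (n - 1)
  have e1 : N - 1 + 1 = N := by omega
  have e2 : n - 1 + 1 = n := by omega
  rw [e1, e2] at h
  exact_mod_cast (by rw [h]; ring : N * (N - 1).choose (n - 1) = n * N.choose n)

lemma choose_id2 (N n : ℕ) (h1 : 1 ≤ n) (h2 : 2 ≤ N) :
    ((N : ℝ) - 1) * (if 2 ≤ n then ((N - 2).choose (n - 2) : ℝ) else 0)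
      = ((n : ℝ) - 1) * ((N - 1).choose (n - 1) : ℝ) := by
  by_cases h : 2 ≤ n
  · rw [if_pos h]
    have hh := Nat.add_one_mul_choose_eq (N - 2) (n - 2)
    have e1 : N - 2 + 1 = N - 1 := by omega
    have e2 : n - 2 + 1 = n - 1 := by omega
    rw [e1, e2] at hh
    have hcast : ((N - 1 : ℕ) : ℝ) * ((N - 2).choose (n - 2) : ℝ)
        = ((n - 1 : ℕ) : ℝ) * ((N - 1).choose (n - 1) : ℝ) := by
      exact_mod_cast (by rw [hh]; ring :
        (N - 1) * (N - 2).choose (n - 2) = (n - 1) * (N - 1).choose (n - 1))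
    have c1 : ((N - 1 : ℕ) : ℝ) = (N : ℝ) - 1 := by
      have : (1 : ℕ) ≤ N := by omega
      push_cast [this]; ring
    have c2 : ((n - 1 : ℕ) : ℝ) = (n : ℝ) - 1 := by
      push_cast [h1]; ring
    rw [c1, c2] at hcast
    exact hcast
  · have hn1 : n = 1 := by omega
    subst hn1
    norm_num

lemma expE_linear (N n : ℕ) (h1 : 1 ≤ n) (h2 : n ≤ N) (a : Fin N → ℝ) :
    expE N n (fun T => ∑ i ∈ T, a i) = ((n : ℝ) / N) * ∑ i, a i := by
  have hN0 : (N : ℝ) ≠ 0 := Nat.cast_ne_zero.mpr (by omega)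
  have hCn : (N.choose n : ℝ) ≠ 0 := Nat.cast_ne_zero.mpr (Nat.choose_pos h2).ne'
  have hid := choose_id1 N n h1 h2
  rw [expE, sum_linear N n h1 a, Finset.card_powersetCard, Finset.card_univ, Fintype.card_fin]
  field_simp
  linear_combination (∑ i, a i) * hid

lemma expE_sq (N n : ℕ) (hN : 2 ≤ N) (h1 : 1 ≤ n) (h2 : n ≤ N) (a : Fin N → ℝ) :
    expE N n (fun T => (∑ i ∈ T, a i) ^ 2)
      = ((n : ℝ) / N) * ∑ i, (a i) ^ 2
        + ((n : ℝ) * ((n : ℝ) - 1)) / ((N : ℝ) * ((N : ℝ) - 1))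
            * ((∑ i, a i) ^ 2 - ∑ i, (a i) ^ 2) := by
  have hN0 : (N : ℝ) ≠ 0 := Nat.cast_ne_zero.mpr (by omega)
  have hCn : (N.choose n : ℝ) ≠ 0 := Nat.cast_ne_zero.mpr (Nat.choose_pos h2).ne'
  have hN1 : (N : ℝ) - 1 ≠ 0 := by
    have : (2 : ℝ) ≤ (N : ℝ) := by exact_mod_cast hN
    intro h; linarith
  have hid1 := choose_id1 N n h1 h2
  have hid2 := choose_id2 N n h1 hN
  rw [expE, sum_sq_aux N n h1 a, Finset.card_powersetCard, Finset.card_univ, Fintype.card_fin]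
  set A := ∑ i, (a i) ^ 2 with hA
  set B := (∑ i, a i) ^ 2 with hB
  set c2r : ℝ := (if 2 ≤ n then ((N - 2).choose (n - 2) : ℝ) else 0) with hc2r
  have e1 : ((N - 1).choose (n - 1) : ℝ) = (n : ℝ) / N * (N.choose n : ℝ) := by
    field_simp
    linear_combination hid1
  have e2 : c2r = ((n : ℝ) * ((n : ℝ) - 1)) / ((N : ℝ) * ((N : ℝ) - 1)) * (N.choose n : ℝ) := by
    rw [div_mul_eq_mul_div, eq_div_iff (mul_ne_zero hN0 hN1)]
    linear_combination (N : ℝ) * hid2 + ((n : ℝ) - 1) * hid1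
  rw [e1, e2]
  field_simp

lemma expE_shift (N n : ℕ) (h2 : n ≤ N) (g : Finset (Fin N) → ℝ) (c : ℝ) :
    expE N n (fun T => g T + c) = expE N n g + c := by
  have hk := expE_card_ne N n h2
  unfold expE
  rw [Finset.sum_add_distrib, Finset.sum_const, nsmul_eq_mul, add_div,
    mul_div_cancel_left₀ _ hk]

lemma varE_shift (N n : ℕ) (h2 : n ≤ N) (g : Finset (Fin N) → ℝ) (c : ℝ) :
    varE N n (fun T => g T + c) = varE N n g := by
  rw [varE, varE, expE_shift N n h2]
  congr 1
  funext T
  ring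

lemma varE_eq (N n : ℕ) (h2 : n ≤ N) (f : Finset (Fin N) → ℝ) :
    varE N n f = expE N n (fun T => f T ^ 2) - (expE N n f) ^ 2 := by
  have hk := expE_card_ne N n h2
  rw [varE]
  unfold expE
  set P := Finset.powersetCard n (Finset.univ : Finset (Fin N)) with hP
  set k : ℝ := (P.card : ℝ) with hkdef
  set m : ℝ := (∑ T ∈ P, f T) / k with hm
  have expand : ∑ T ∈ P, (f T - m) ^ 2
      = ∑ T ∈ P, f T ^ 2 - (2 * m) * ∑ T ∈ P, f T + k * m ^ 2 := by
    have h : ∀ T : Finset (Fin N), (f T - m) ^ 2 = f T ^ 2 - (2 * m) * f T + m ^ 2 :=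
      fun T => by ring
    simp_rw [h]
    rw [Finset.sum_add_distrib, Finset.sum_sub_distrib, ← Finset.mul_sum, Finset.sum_const,
      nsmul_eq_mul]
  rw [expand, hm]
  field_simp
  ring



set_option maxHeartbeats 4000000 in
/-- Neyman's variance formula: the randomization variance of the
difference-in-means estimator equals `S₁²/N₁ + S₀²/N₀ − S_τ²/N`. -/
theorem stmt_3 (N N₁ N₀ : ℕ) (hN : 2 ≤ N) (hN₁ : 1 ≤ N₁) (hN₁' : N₁ ≤ N - 1)
    (hN₀ : N₀ = N - N₁) (Y1 Y0 : Fin N → ℝ) (Ybar1 Ybar0 τ S1sq S0sq Stausq : ℝ)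
    (hYbar1 : Ybar1 = (∑ i, Y1 i) / N) (hYbar0 : Ybar0 = (∑ i, Y0 i) / N)
    (hτ : τ = Ybar1 - Ybar0)
    (hS1 : S1sq = (∑ i, (Y1 i - Ybar1) ^ 2) / (N - 1))
    (hS0 : S0sq = (∑ i, (Y0 i - Ybar0) ^ 2) / (N - 1))
    (hStau : Stausq = (∑ i, ((Y1 i - Y0 i) - τ) ^ 2) / (N - 1)) :
    varE N N₁ (fun T => (∑ i ∈ T, Y1 i) / N₁ - (∑ i ∈ Tᶜ, Y0 i) / N₀)
      = S1sq / N₁ + S0sq / N₀ - Stausq / N := by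
  have hNn : N₁ ≤ N := by omega
  have h1N₀ : 1 ≤ N₀ := by omega
  have hsum : N₁ + N₀ = N := by omega
  have hn1 : ((N₁ : ℝ)) ≠ 0 := Nat.cast_ne_zero.mpr (by omega)
  have hn0 : ((N₀ : ℝ)) ≠ 0 := Nat.cast_ne_zero.mpr (by omega)
  have hNne : ((N : ℝ)) ≠ 0 := Nat.cast_ne_zero.mpr (by omega)
  have hN1ne : (N : ℝ) - 1 ≠ 0 := by
    have : (2 : ℝ) ≤ (N : ℝ) := by exact_mod_cast hN
    intro h; linarith
  have hNr : (N : ℝ) = (N₁ : ℝ) + (N₀ : ℝ) := by exact_mod_cast hsum.symm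
  have hf : (fun T : Finset (Fin N) => (∑ i ∈ T, Y1 i) / N₁ - (∑ i ∈ Tᶜ, Y0 i) / N₀)
      = fun T => (∑ i ∈ T, (Y1 i / N₁ + Y0 i / N₀)) + (-(∑ i, Y0 i) / N₀) := by
    funext T
    have hcompl : ∑ i ∈ Tᶜ, Y0 i = (∑ i, Y0 i) - ∑ i ∈ T, Y0 i := by
      have := Finset.sum_compl_add_sum T Y0
      linarith
    rw [hcompl, Finset.sum_add_distrib, ← Finset.sum_div, ← Finset.sum_div]
    ring
  rw [hf, varE_shift N N₁ hNn, varE_eq N N₁ hNn, expE_linear N N₁ hN₁ hNn,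
      expE_sq N N₁ hN hN₁ hNn]
  have hA : (∑ i, (Y1 i / N₁ + Y0 i / N₀)) = (∑ i, Y1 i) / N₁ + (∑ i, Y0 i) / N₀ := by
    rw [Finset.sum_add_distrib, ← Finset.sum_div, ← Finset.sum_div]
  have hA2 : (∑ i, (Y1 i / N₁ + Y0 i / N₀) ^ 2)
      = (∑ i, Y1 i ^ 2) / (N₁ : ℝ) ^ 2 + 2 * (∑ i, Y1 i * Y0 i) / ((N₁ : ℝ) * N₀)
        + (∑ i, Y0 i ^ 2) / (N₀ : ℝ) ^ 2 := by
    have h : ∀ i, (Y1 i / N₁ + Y0 i / N₀) ^ 2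
        = Y1 i ^ 2 / (N₁ : ℝ) ^ 2 + 2 * (Y1 i * Y0 i) / ((N₁ : ℝ) * N₀)
          + Y0 i ^ 2 / (N₀ : ℝ) ^ 2 := fun i => by ring
    simp_rw [h]
    rw [Finset.sum_add_distrib, Finset.sum_add_distrib, ← Finset.sum_div, ← Finset.sum_div,
      ← Finset.sum_div, ← Finset.mul_sum]
  have hE1 : ∑ i, (Y1 i - Ybar1) ^ 2
      = ∑ i, Y1 i ^ 2 - 2 * Ybar1 * (∑ i, Y1 i) + N * Ybar1 ^ 2 := by
    have h : ∀ i, (Y1 i - Ybar1) ^ 2 = Y1 i ^ 2 - (2 * Ybar1) * Y1 i + Ybar1 ^ 2 :=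
      fun i => by ring
    simp_rw [h]
    rw [Finset.sum_add_distrib, Finset.sum_sub_distrib, ← Finset.mul_sum, Finset.sum_const,
      nsmul_eq_mul, Finset.card_univ, Fintype.card_fin]
  have hE0 : ∑ i, (Y0 i - Ybar0) ^ 2
      = ∑ i, Y0 i ^ 2 - 2 * Ybar0 * (∑ i, Y0 i) + N * Ybar0 ^ 2 := by
    have h : ∀ i, (Y0 i - Ybar0) ^ 2 = Y0 i ^ 2 - (2 * Ybar0) * Y0 i + Ybar0 ^ 2 :=
      fun i => by ring
    simp_rw [h]
    rw [Finset.sum_add_distrib, Finset.sum_sub_distrib, ← Finset.mul_sum, Finset.sum_const,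
      nsmul_eq_mul, Finset.card_univ, Fintype.card_fin]
  have hEt : ∑ i, ((Y1 i - Y0 i) - τ) ^ 2
      = ∑ i, Y1 i ^ 2 - 2 * (∑ i, Y1 i * Y0 i) + ∑ i, Y0 i ^ 2
        - 2 * τ * (∑ i, Y1 i) + 2 * τ * (∑ i, Y0 i) + N * τ ^ 2 := by
    have h : ∀ i, ((Y1 i - Y0 i) - τ) ^ 2
        = Y1 i ^ 2 - (2 : ℝ) * (Y1 i * Y0 i) + Y0 i ^ 2 - (2 * τ) * Y1 i + (2 * τ) * Y0 i
          + τ ^ 2 := fun i => by ring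
    simp_rw [h]
    simp only [Finset.sum_add_distrib, Finset.sum_sub_distrib, ← Finset.mul_sum,
      Finset.sum_const, nsmul_eq_mul, Finset.card_univ, Fintype.card_fin]
  have hN0r : (N₀ : ℝ) = (N : ℝ) - (N₁ : ℝ) := by
    have h := hNr; linarith
  have hsub : (N : ℝ) - (N₁ : ℝ) ≠ 0 := by rw [← hN0r]; exact hn0
  rw [hA, hA2, hS1, hS0, hStau, hE1, hE0, hEt, hτ, hYbar1, hYbar0, hN0r]
  field_simp
  ring
end

section
/- Under monotonicity (Y₁(i) ≥ Y₀(i) for all i, so N₀₁ = 0), the cell counts of the Science Table are identified: E[(N/N₀)·n₀₁(T)] = N₁₁, E[(N/N₁)·n₁₀(T)] = N₀₀, and E[N − (N/N₀)·n₀₁(T) − (N/N₁)·n₁₀(T)] = N₁₀, where expectations are over the uniform distribution on subsets T of size N₁. -/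
open Finset

lemma cnt_not_mem (N k : ℕ) (i : Fin N) :
    ((Finset.powersetCard k (Finset.univ : Finset (Fin N))).filter (fun T => i ∉ T)).card
      = (N - 1).choose k := by
  have h : (Finset.powersetCard k (Finset.univ : Finset (Fin N))).filter (fun T => i ∉ T)
      = Finset.powersetCard k (Finset.univ.erase i) := by
    ext T
    simp only [mem_filter, mem_powersetCard, subset_erase, subset_univ, true_and]
    tauto
  rw [h, card_powersetCard, card_erase_of_mem (mem_univ i), card_univ, Fintype.card_fin]

lemma cnt_mem (N k : ℕ) (hk : 1 ≤ k) (hN : 1 ≤ N) (i : Fin N) :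
    ((Finset.powersetCard k (Finset.univ : Finset (Fin N))).filter (fun T => i ∈ T)).card
      = (N - 1).choose (k - 1) := by
  obtain ⟨m, rfl⟩ : ∃ m, N = m + 1 := ⟨N - 1, by omega⟩
  obtain ⟨j, rfl⟩ : ∃ j, k = j + 1 := ⟨k - 1, by omega⟩
  have h1 := Finset.card_filter_add_card_filter_not
    (s := Finset.powersetCard (j+1) (Finset.univ : Finset (Fin (m+1)))) (p := fun T => i ∈ T)
  have h2 := cnt_not_mem (m+1) (j+1) i
  have h3 : (Finset.powersetCard (j+1) (Finset.univ : Finset (Fin (m+1)))).card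
      = (m+1).choose (j+1) := by
    rw [card_powersetCard, card_univ, Fintype.card_fin]
  have h4 : (m+1).choose (j+1) = m.choose j + m.choose (j+1) := Nat.choose_succ_succ m j
  simp only [Nat.add_sub_cancel] at *
  omega

lemma sum_card_filter_mem' (N k : ℕ) (p : Fin N → Prop) [DecidablePred p] :
    ∑ T ∈ Finset.powersetCard k (Finset.univ : Finset (Fin N)), ((T.filter p).card)
      = ∑ i ∈ Finset.univ.filter p,
          ((Finset.powersetCard k (Finset.univ : Finset (Fin N))).filter (fun T => i ∈ T)).card := by
  have h : ∀ T : Finset (Fin N), (T.filter p).card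
      = ∑ i ∈ Finset.univ.filter p, (if i ∈ T then 1 else 0) := by
    intro T
    rw [← Finset.card_filter]
    congr 1
    ext x
    simp [and_comm]
  rw [Finset.sum_congr rfl fun T _ => h T, Finset.sum_comm]
  congr 1
  ext i
  rw [Finset.card_filter]

lemma sum_card_filter_mem (N k : ℕ) (hk : 1 ≤ k) (hN : 1 ≤ N) (p : Fin N → Prop)
    [DecidablePred p] :
    ∑ T ∈ Finset.powersetCard k (Finset.univ : Finset (Fin N)), ((T.filter p).card)
      = (Finset.univ.filter p).card * (N - 1).choose (k - 1) := by
  rw [sum_card_filter_mem',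
    Finset.sum_congr rfl fun i _ => cnt_mem N k hk hN i, Finset.sum_const, smul_eq_mul]

lemma sum_card_filter_not_mem' (N k : ℕ) (p : Fin N → Prop) [DecidablePred p] :
    ∑ T ∈ Finset.powersetCard k (Finset.univ : Finset (Fin N)), ((Tᶜ.filter p).card)
      = ∑ i ∈ Finset.univ.filter p,
          ((Finset.powersetCard k (Finset.univ : Finset (Fin N))).filter (fun T => i ∉ T)).card := by
  have h : ∀ T : Finset (Fin N), (Tᶜ.filter p).card
      = ∑ i ∈ Finset.univ.filter p, (if i ∉ T then 1 else 0) := by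
    intro T
    rw [← Finset.card_filter]
    congr 1
    ext x
    simp [and_comm]
  rw [Finset.sum_congr rfl fun T _ => h T, Finset.sum_comm]
  congr 1
  ext i
  rw [Finset.card_filter]

lemma sum_card_filter_not_mem (N k : ℕ) (p : Fin N → Prop) [DecidablePred p] :
    ∑ T ∈ Finset.powersetCard k (Finset.univ : Finset (Fin N)), ((Tᶜ.filter p).card)
      = (Finset.univ.filter p).card * (N - 1).choose k := by
  rw [sum_card_filter_not_mem',
    Finset.sum_congr rfl fun i _ => cnt_not_mem N k i, Finset.sum_const, smul_eq_mul]

/-- Under monotonicity (`Y₁(i) ≥ Y₀(i)` for all `i`), the cell counts of the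
Science Table are identified:
`E[(N/N₀) n₀₁(T)] = N₁₁`, `E[(N/N₁) n₁₀(T)] = N₀₀`, and
`E[N − (N/N₀) n₀₁(T) − (N/N₁) n₁₀(T)] = N₁₀`. -/
theorem stmt_4 (N N₁ N₀ : ℕ) (hN₁ : 1 ≤ N₁) (hN₁' : N₁ ≤ N - 1) (hN₀ : N₀ = N - N₁)
    (Y1 Y0 : Fin N → ℕ) (hY1 : ∀ i, Y1 i ≤ 1) (hY0 : ∀ i, Y0 i ≤ 1)
    (hmono : ∀ i, Y0 i ≤ Y1 i)
    (N11 N10 N00 : ℕ)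
    (hN11 : N11 = (Finset.univ.filter (fun i => Y1 i = 1 ∧ Y0 i = 1)).card)
    (hN10 : N10 = (Finset.univ.filter (fun i => Y1 i = 1 ∧ Y0 i = 0)).card)
    (hN00 : N00 = (Finset.univ.filter (fun i => Y1 i = 0 ∧ Y0 i = 0)).card)
    (n01 n10 : Finset (Fin N) → ℕ)
    (hn01 : ∀ T, n01 T = (Tᶜ.filter (fun i => Y0 i = 1)).card)
    (hn10 : ∀ T, n10 T = (T.filter (fun i => Y1 i = 0)).card) :
    expE N N₁ (fun T => (N : ℝ) / N₀ * n01 T) = N11 ∧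
    expE N N₁ (fun T => (N : ℝ) / N₁ * n10 T) = N00 ∧
    expE N N₁ (fun T => (N : ℝ) - (N : ℝ) / N₀ * n01 T - (N : ℝ) / N₁ * n10 T) = N10 := by
  have hN : 2 ≤ N := by omega
  have hN₀pos : 1 ≤ N₀ := by omega
  have hN₁N : N₁ ≤ N := by omega
  have M1 : (Finset.univ.filter (fun i => Y0 i = 1)).card = N11 := by
    rw [hN11]
    congr 1
    ext i
    have := hY1 i; have := hmono i
    simp only [mem_filter, mem_univ, true_and]
    omega
  have M2 : (Finset.univ.filter (fun i => Y1 i = 0)).card = N00 := by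
    rw [hN00]
    congr 1
    ext i
    have := hY0 i; have := hmono i
    simp only [mem_filter, mem_univ, true_and]
    omega
  have hpart : N11 + N10 + N00 = N := by
    rw [hN11, hN10, hN00, Finset.card_filter, Finset.card_filter, Finset.card_filter,
      ← Finset.sum_add_distrib, ← Finset.sum_add_distrib]
    have h1 : ∀ i ∈ (Finset.univ : Finset (Fin N)),
        ((if Y1 i = 1 ∧ Y0 i = 1 then 1 else 0) + (if Y1 i = 1 ∧ Y0 i = 0 then 1 else 0)
          + (if Y1 i = 0 ∧ Y0 i = 0 then 1 else 0)) = 1 := by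
      intro i _
      have := hY1 i; have := hY0 i; have := hmono i
      split_ifs <;> omega
    rw [Finset.sum_congr rfl h1, Finset.sum_const, smul_eq_mul, mul_one, card_univ,
      Fintype.card_fin]
  have hcard : ((Finset.powersetCard N₁ (Finset.univ : Finset (Fin N))).card : ℝ)
      = (N.choose N₁ : ℝ) := by
    rw [card_powersetCard, card_univ, Fintype.card_fin]
  have hCpos : (0 : ℝ) < (N.choose N₁ : ℝ) := by
    exact_mod_cast Nat.choose_pos hN₁N
  have hCne : (N.choose N₁ : ℝ) ≠ 0 := ne_of_gt hCpos
  have hN₀ne : ((N₀ : ℝ)) ≠ 0 := by positivity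
  have hN₁ne : ((N₁ : ℝ)) ≠ 0 := by positivity
  have id1 : N * (N - 1).choose N₁ = N₀ * N.choose N₁ := by
    have e1 : (N - 1).choose N₁ = (N - 1).choose (N₀ - 1) := by
      rw [← Nat.choose_symm hN₁']
      congr 1
      omega
    have e2 := Nat.add_one_mul_choose_eq (N - 1) (N₀ - 1)
    have e3 : N - 1 + 1 = N := by omega
    have e4 : N₀ - 1 + 1 = N₀ := by omega
    rw [e3, e4] at e2
    have e5 : N.choose N₀ = N.choose N₁ := by
      rw [hN₀, Nat.choose_symm hN₁N]
    rw [e1, e2, e5]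
    ring
  have id2 : N * (N - 1).choose (N₁ - 1) = N₁ * N.choose N₁ := by
    have e2 := Nat.add_one_mul_choose_eq (N - 1) (N₁ - 1)
    have e3 : N - 1 + 1 = N := by omega
    have e4 : N₁ - 1 + 1 = N₁ := by omega
    rw [e3, e4] at e2
    rw [e2]; ring
  have key1 : (N : ℝ) * ((N - 1).choose N₁ : ℝ) = (N₀ : ℝ) * (N.choose N₁ : ℝ) := by
    exact_mod_cast congrArg (Nat.cast : ℕ → ℝ) id1
  have key2 : (N : ℝ) * ((N - 1).choose (N₁ - 1) : ℝ) = (N₁ : ℝ) * (N.choose N₁ : ℝ) := by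
    exact_mod_cast congrArg (Nat.cast : ℕ → ℝ) id2
  have S1 : ∑ T ∈ Finset.powersetCard N₁ (Finset.univ : Finset (Fin N)), (n01 T : ℝ)
      = (N11 : ℝ) * ((N - 1).choose N₁ : ℝ) := by
    have h := sum_card_filter_not_mem N N₁ (fun i => Y0 i = 1)
    rw [M1] at h
    have h2 : ∑ T ∈ Finset.powersetCard N₁ (Finset.univ : Finset (Fin N)), n01 T
        = N11 * (N - 1).choose N₁ := by
      rw [Finset.sum_congr rfl fun T _ => hn01 T]; exact h
    exact_mod_cast congrArg (Nat.cast : ℕ → ℝ) h2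
  have S2 : ∑ T ∈ Finset.powersetCard N₁ (Finset.univ : Finset (Fin N)), (n10 T : ℝ)
      = (N00 : ℝ) * ((N - 1).choose (N₁ - 1) : ℝ) := by
    have h := sum_card_filter_mem N N₁ hN₁ (by omega) (fun i => Y1 i = 0)
    rw [M2] at h
    have h2 : ∑ T ∈ Finset.powersetCard N₁ (Finset.univ : Finset (Fin N)), n10 T
        = N00 * (N - 1).choose (N₁ - 1) := by
      rw [Finset.sum_congr rfl fun T _ => hn10 T]; exact h
    exact_mod_cast congrArg (Nat.cast : ℕ → ℝ) h2
  have A1 : (N : ℝ) / N₀ * ((N11 : ℝ) * ((N - 1).choose N₁ : ℝ))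
      = (N11 : ℝ) * (N.choose N₁ : ℝ) := by
    field_simp
    linear_combination (N11 : ℝ) * key1
  have A2 : (N : ℝ) / N₁ * ((N00 : ℝ) * ((N - 1).choose (N₁ - 1) : ℝ))
      = (N00 : ℝ) * (N.choose N₁ : ℝ) := by
    field_simp
    linear_combination (N00 : ℝ) * key2
  have hpartR : (N11 : ℝ) + N10 + N00 = N := by
    exact_mod_cast congrArg (Nat.cast : ℕ → ℝ) hpart
  refine ⟨?_, ?_, ?_⟩
  · unfold expE
    rw [hcard, ← Finset.mul_sum, S1, A1, mul_div_assoc, div_self hCne, mul_one]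
  · unfold expE
    rw [hcard, ← Finset.mul_sum, S2, A2, mul_div_assoc, div_self hCne, mul_one]
  · unfold expE
    rw [hcard]
    have hsplit : ∑ T ∈ Finset.powersetCard N₁ (Finset.univ : Finset (Fin N)),
        ((N : ℝ) - (N : ℝ) / N₀ * n01 T - (N : ℝ) / N₁ * n10 T)
      = ((N.choose N₁ : ℝ) * N)
        - (N : ℝ) / N₀ * ((N11 : ℝ) * ((N - 1).choose N₁ : ℝ))
        - (N : ℝ) / N₁ * ((N00 : ℝ) * ((N - 1).choose (N₁ - 1) : ℝ)) := by
      rw [Finset.sum_sub_distrib, Finset.sum_sub_distrib, Finset.sum_const, ← Finset.mul_sum,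
        ← Finset.mul_sum, S1, S2, nsmul_eq_mul, hcard]
    rw [hsplit, A1, A2]
    have : (N.choose N₁ : ℝ) * N - (N11 : ℝ) * (N.choose N₁ : ℝ)
        - (N00 : ℝ) * (N.choose N₁ : ℝ) = (N10 : ℝ) * (N.choose N₁ : ℝ) := by
      linear_combination (-(N.choose N₁ : ℝ)) * hpartR
    rw [this, mul_div_assoc, div_self hCne, mul_one]
end

section
/- If the potential outcomes are non-negatively correlated in the sense that N₁₁·N₀₀ − N₁₀·N₀₁ ≥ 0, then N₀₁ ≤ N·p₀·(1−p₁); consequently, under this assumption, max(0, −Nτ) ≤ N₀₁ ≤ N·p₀·(1−p₁). -/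
/-- If the potential outcomes are non-negatively correlated, in the sense that
`N₁₁ N₀₀ − N₁₀ N₀₁ ≥ 0`, then `N₀₁ ≤ N p₀ (1 − p₁)`; consequently,
`max(0, −Nτ) ≤ N₀₁ ≤ N p₀ (1 − p₁)`. -/
theorem stmt_8 (N N11 N10 N01 N00 : ℕ) (hsum : N11 + N10 + N01 + N00 = N)
    (hN : 1 ≤ N) (p1 p0 τ : ℝ)
    (hp1 : p1 = ((N11 : ℝ) + N10) / N) (hp0 : p0 = ((N11 : ℝ) + N01) / N)
    (hτ : τ = ((N10 : ℝ) - N01) / N)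
    (hcorr : (0 : ℝ) ≤ (N11 : ℝ) * N00 - (N10 : ℝ) * N01) :
    (N01 : ℝ) ≤ N * p0 * (1 - p1) ∧
    max 0 (-(N * τ)) ≤ (N01 : ℝ) := by
  have hNpos : (0 : ℝ) < N := by exact_mod_cast hN
  have hsum' : (N11 : ℝ) + N10 + N01 + N00 = N := by exact_mod_cast hsum
  subst hp1 hp0 hτ
  constructor
  · rw [mul_div_assoc', mul_div_cancel_left₀ _ hNpos.ne',
      show (1 : ℝ) - ((N11:ℝ)+N10)/N = ((N01:ℝ)+N00)/N by field_simp; linarith,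
      mul_div_assoc', le_div_iff₀ hNpos]
    nlinarith [Nat.cast_nonneg (α := ℝ) N01]
  · rw [max_le_iff]
    constructor
    · positivity
    · rw [mul_div_cancel₀ _ hNpos.ne']
      have : (0:ℝ) ≤ N10 := Nat.cast_nonneg _
      linarith
end

section
/- Under monotonicity (N₀₁ = 0), for nonnegative integers a, b, c, d with a + b = N₁ and c + d = N₀ satisfying c ≤ N₁₁ ≤ a + c ≤ N₁₀ + N₁₁ ≤ N − b, the probability under the uniform distribution on subsets T of size N₁ that the observed table equals (n₁₁, n₁₀, n₀₁, n₀₀) = (a, b, c, d) is C(N₁₁, N₁₁ − c) · C(N₁₀, a + c − N₁₁) · C(N − N₁₀ − N₁₁, b) / C(N, N₁). -/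
open Classical

section Helpers

open Finset

lemma union3_inter {n : ℕ} {A B C SA SB SC : Finset (Fin n)}
    (hAB : Disjoint A B) (hAC : Disjoint A C)
    (hA1 : SA ⊆ A) (hB1 : SB ⊆ B) (hC1 : SC ⊆ C) :
    (SA ∪ SB ∪ SC) ∩ A = SA := by
  ext i
  simp only [mem_inter, mem_union]
  constructor
  · rintro ⟨(h | h) | h, hiA⟩
    · exact h
    · exact absurd hiA (disjoint_right.mp hAB (hB1 h))
    · exact absurd hiA (disjoint_right.mp hAC (hC1 h))
  · intro h; exact ⟨Or.inl (Or.inl h), hA1 h⟩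

lemma count_inter {n : ℕ} (A B C : Finset (Fin n))
    (hAB : Disjoint A B) (hAC : Disjoint A C) (hBC : Disjoint B C)
    (hU : A ∪ B ∪ C = univ) (m p q r : ℕ) (hm : p + q + r = m) :
    ((powersetCard m (univ : Finset (Fin n))).filter
      (fun T => (T ∩ A).card = p ∧ (T ∩ B).card = q ∧ (T ∩ C).card = r)).card
    = A.card.choose p * B.card.choose q * C.card.choose r := by
  have key : ∀ SA SB SC : Finset (Fin n), SA ⊆ A → SB ⊆ B → SC ⊆ C →
      (SA ∪ SB ∪ SC) ∩ A = SA ∧ (SA ∪ SB ∪ SC) ∩ B = SB ∧ (SA ∪ SB ∪ SC) ∩ C = SC := by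
    intro SA SB SC hA1 hB1 hC1
    refine ⟨union3_inter hAB hAC hA1 hB1 hC1, ?_, ?_⟩
    · rw [union_comm SA SB]
      exact union3_inter hAB.symm hBC hB1 hA1 hC1
    · rw [union_comm _ SC, ← union_assoc]
      exact union3_inter hAC.symm hBC.symm hC1 hA1 hB1
  rw [← card_powersetCard, ← card_powersetCard, ← card_powersetCard,
    ← card_product, ← card_product]
  apply Finset.card_nbij' (fun T => ((T ∩ A, T ∩ B), T ∩ C))
    (fun x => x.1.1 ∪ x.1.2 ∪ x.2)
  · intro T hT
    simp only [mem_coe, mem_filter, mem_powersetCard] at hT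
    simp only [mem_coe, mem_product, mem_powersetCard]
    exact ⟨⟨⟨inter_subset_right, hT.2.1⟩, inter_subset_right, hT.2.2.1⟩,
      inter_subset_right, hT.2.2.2⟩
  · intro x hx
    simp only [mem_coe, mem_product, mem_powersetCard] at hx
    obtain ⟨⟨⟨hA1, hA2⟩, hB1, hB2⟩, hC1, hC2⟩ := hx
    obtain ⟨eA, eB, eC⟩ := key _ _ _ hA1 hB1 hC1
    have d1 : Disjoint x.1.1 x.1.2 := hAB.mono hA1 hB1
    have d2 : Disjoint (x.1.1 ∪ x.1.2) x.2 :=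
      disjoint_union_left.mpr ⟨hAC.mono hA1 hC1, hBC.mono hB1 hC1⟩
    simp only [mem_coe, mem_filter, mem_powersetCard, eA, eB, eC]
    refine ⟨⟨subset_univ _, ?_⟩, hA2, hB2, hC2⟩
    rw [card_union_of_disjoint d2, card_union_of_disjoint d1, hA2, hB2, hC2, hm]
  · intro T hT
    simp only
    rw [← inter_union_distrib_left, ← inter_union_distrib_left, hU, inter_univ]
  · intro x hx
    simp only [mem_coe, mem_product, mem_powersetCard] at hx
    obtain ⟨⟨⟨hA1, hA2⟩, hB1, hB2⟩, hC1, hC2⟩ := hx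
    obtain ⟨eA, eB, eC⟩ := key _ _ _ hA1 hB1 hC1
    simp only [eA, eB, eC]

end Helpers

/-- Probability of an event `P` about the treatment group `T`, where `T` is a
uniformly random subset of `{1,…,N}` of size `N₁`. -/
noncomputable def probE (N N₁ : ℕ) (P : Finset (Fin N) → Prop) : ℝ :=
  (((Finset.powersetCard N₁ (Finset.univ : Finset (Fin N))).filter P).card : ℝ) /
    ((Finset.powersetCard N₁ (Finset.univ : Finset (Fin N))).card : ℝ)

/-- Under monotonicity, the probability that the observed `2×2` table equals
`(a, b, c, d)` (with `c ≤ N₁₁ ≤ a+c ≤ N₁₀+N₁₁ ≤ N−b`) is the multivariate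
hypergeometric probability
`C(N₁₁, N₁₁−c) C(N₁₀, a+c−N₁₁) C(N−N₁₀−N₁₁, b) / C(N, N₁)`. -/
theorem stmt_12 (N N₁ N₀ : ℕ) (hN₁ : 1 ≤ N₁) (hN₁' : N₁ ≤ N - 1) (hN₀ : N₀ = N - N₁)
    (Y1 Y0 : Fin N → ℕ) (hY1 : ∀ i, Y1 i ≤ 1) (hY0 : ∀ i, Y0 i ≤ 1)
    (hmono : ∀ i, Y0 i ≤ Y1 i)
    (N11 N10 : ℕ)
    (hN11 : N11 = (Finset.univ.filter (fun i => Y1 i = 1 ∧ Y0 i = 1)).card)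
    (hN10 : N10 = (Finset.univ.filter (fun i => Y1 i = 1 ∧ Y0 i = 0)).card)
    (a b c d : ℕ) (hab : a + b = N₁) (hcd : c + d = N₀)
    (h1 : c ≤ N11) (h2 : N11 ≤ a + c) (h3 : a + c ≤ N10 + N11) (h4 : N10 + N11 ≤ N - b) :
    probE N N₁ (fun T =>
        (T.filter (fun i => Y1 i = 1)).card = a ∧
        (T.filter (fun i => Y1 i = 0)).card = b ∧
        (Tᶜ.filter (fun i => Y0 i = 1)).card = c ∧
        (Tᶜ.filter (fun i => Y0 i = 0)).card = d)
      = (N11.choose (N11 - c) : ℝ) * (N10.choose (a + c - N11)) *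
          ((N - N10 - N11).choose b) / (N.choose N₁) := by
  classical
  set A : Finset (Fin N) := Finset.univ.filter (fun i => Y1 i = 1 ∧ Y0 i = 1) with hA
  set B : Finset (Fin N) := Finset.univ.filter (fun i => Y1 i = 1 ∧ Y0 i = 0) with hB
  set C : Finset (Fin N) := Finset.univ.filter (fun i => Y1 i = 0) with hC
  have hAB : Disjoint A B := by
    rw [Finset.disjoint_left]
    intro i hi hi'
    simp only [hA, hB, Finset.mem_filter] at hi hi'
    omega
  have hAC : Disjoint A C := by
    rw [Finset.disjoint_left]
    intro i hi hi'
    simp only [hA, hC, Finset.mem_filter] at hi hi'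
    omega
  have hBC : Disjoint B C := by
    rw [Finset.disjoint_left]
    intro i hi hi'
    simp only [hB, hC, Finset.mem_filter] at hi hi'
    omega
  have hU : A ∪ B ∪ C = Finset.univ := by
    ext i
    simp only [hA, hB, hC, Finset.mem_union, Finset.mem_filter, Finset.mem_univ, true_and,
      iff_true]
    have := hY1 i; have := hY0 i; have := hmono i
    omega
  have hcardA : A.card = N11 := hN11.symm
  have hcardB : B.card = N10 := hN10.symm
  have hsum : A.card + B.card + C.card = N := by
    rw [← Finset.card_union_of_disjoint hAB,
      ← Finset.card_union_of_disjoint (Finset.disjoint_union_left.mpr ⟨hAC, hBC⟩), hU,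
      Finset.card_univ, Fintype.card_fin]
  have hNle : N₁ + 1 ≤ N := by omega
  have hcardC : C.card = N - N10 - N11 := by omega
  -- pointwise equivalence of the event with an intersection-count condition
  have hiff : ∀ T ∈ Finset.powersetCard N₁ (Finset.univ : Finset (Fin N)),
      ((T.filter (fun i => Y1 i = 1)).card = a ∧
        (T.filter (fun i => Y1 i = 0)).card = b ∧
        (Tᶜ.filter (fun i => Y0 i = 1)).card = c ∧
        (Tᶜ.filter (fun i => Y0 i = 0)).card = d) ↔
      ((T ∩ A).card = N11 - c ∧ (T ∩ B).card = a + c - N11 ∧ (T ∩ C).card = b) := by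
    intro T hT
    rw [Finset.mem_powersetCard] at hT
    have hTcard : T.card = N₁ := hT.2
    have f1 : T.filter (fun i => Y1 i = 1) = (T ∩ A) ∪ (T ∩ B) := by
      ext i
      simp only [hA, hB, Finset.mem_filter, Finset.mem_union, Finset.mem_inter,
        Finset.mem_univ, true_and]
      have := hY0 i
      by_cases hi : i ∈ T <;> simp [hi] <;> omega
    have f2 : T.filter (fun i => Y1 i = 0) = T ∩ C := by
      ext i
      simp only [hC, Finset.mem_filter, Finset.mem_inter, Finset.mem_univ, true_and]
    have f3 : Tᶜ.filter (fun i => Y0 i = 1) = A \ T := by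
      ext i
      simp only [hA, Finset.mem_filter, Finset.mem_compl, Finset.mem_sdiff,
        Finset.mem_univ, true_and]
      have := hY1 i; have := hmono i
      by_cases hi : i ∈ T <;> simp [hi] <;> omega
    have f4 : Tᶜ.filter (fun i => Y0 i = 0) = (B ∪ C) \ T := by
      ext i
      simp only [hB, hC, Finset.mem_filter, Finset.mem_compl, Finset.mem_sdiff,
        Finset.mem_union, Finset.mem_univ, true_and]
      have := hY1 i; have := hY0 i; have := hmono i
      by_cases hi : i ∈ T <;> simp [hi] <;> omega
    have dAB : Disjoint (T ∩ A) (T ∩ B) :=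
      hAB.mono Finset.inter_subset_right Finset.inter_subset_right
    have dBC : Disjoint (T ∩ B) (T ∩ C) :=
      hBC.mono Finset.inter_subset_right Finset.inter_subset_right
    have dAC : Disjoint (T ∩ A) (T ∩ C) :=
      hAC.mono Finset.inter_subset_right Finset.inter_subset_right
    have xA : (T ∩ A).card ≤ N11 := hcardA ▸ Finset.card_le_card Finset.inter_subset_right
    have xB : (T ∩ B).card ≤ N10 := hcardB ▸ Finset.card_le_card Finset.inter_subset_right
    have xC : (T ∩ C).card ≤ C.card := Finset.card_le_card Finset.inter_subset_right
    have htot : (T ∩ A).card + (T ∩ B).card + (T ∩ C).card = N₁ := by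
      rw [← Finset.card_union_of_disjoint dAB,
        ← Finset.card_union_of_disjoint (Finset.disjoint_union_left.mpr ⟨dAC, dBC⟩),
        ← Finset.inter_union_distrib_left, ← Finset.inter_union_distrib_left, hU,
        Finset.inter_univ, hTcard]
    have c3 : (A \ T).card = N11 - (T ∩ A).card := by
      have := Finset.card_inter_add_card_sdiff A T
      rw [Finset.inter_comm] at this
      omega
    have c4 : ((B ∪ C) \ T).card = (N10 + C.card) - ((T ∩ B).card + (T ∩ C).card) := by
      have h := Finset.card_inter_add_card_sdiff (B ∪ C) T
      have h2 : ((B ∪ C) ∩ T).card = (T ∩ B).card + (T ∩ C).card := by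
        rw [Finset.inter_comm, Finset.inter_union_distrib_left,
          Finset.card_union_of_disjoint dBC]
      have h3 : (B ∪ C).card = N10 + C.card := by
        rw [Finset.card_union_of_disjoint hBC, hcardB]
      omega
    rw [f1, f2, f3, f4, Finset.card_union_of_disjoint dAB, c3, c4]
    omega
  have hP : ∀ inst : DecidablePred (fun T : Finset (Fin N) =>
        (T.filter (fun i => Y1 i = 1)).card = a ∧
        (T.filter (fun i => Y1 i = 0)).card = b ∧
        (Tᶜ.filter (fun i => Y0 i = 1)).card = c ∧
        (Tᶜ.filter (fun i => Y0 i = 0)).card = d),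
      (@Finset.filter _ _ inst (Finset.powersetCard N₁ (Finset.univ : Finset (Fin N)))).card
      = N11.choose (N11 - c) * N10.choose (a + c - N11) * (N - N10 - N11).choose b := by
    intro inst
    rw [Finset.filter_congr hiff,
      count_inter A B C hAB hAC hBC hU N₁ (N11 - c) (a + c - N11) b (by omega),
      hcardA, hcardB, hcardC]
  unfold probE
  rw [hP, Finset.card_powersetCard, Finset.card_univ, Fintype.card_fin]
  push_cast
  ring
end
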